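/- arXiv:1705.09673 — 6 statements merged into one kernel-verified Lean document; each statement's English description precedes it below -/
import Mathlib

section
/- Let p be a prime with p ≤ k and let r ≥ 2. Then w(r, k) > p · (w(r - ⌈r/p⌉, k) - 1), where w denotes the van der Waerden number. -/
/-- `hasAP c N k` : the coloring `c` of `{1,...,N}` contains a monochromatic
arithmetic progression of length `k` with positive common difference. -/
def hasAP (c : ℕ → ℕ) (N k : ℕ) : Prop :=
  ∃ a d, 1 ≤ a ∧ 1 ≤ d ∧ a + (k - 1) * d ≤ N ∧ ∀ i < k, c (a + i * d) = c a

/-- `validColoring r k N c` : `c` is an `r`-coloring of `{1,...,N}` with no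
monochromatic `k`-term arithmetic progression. -/
def validColoring (r k N : ℕ) (c : ℕ → ℕ) : Prop :=
  (∀ n, 1 ≤ n → n ≤ N → 1 ≤ c n ∧ c n ≤ r) ∧ ¬ hasAP c N k

/-- The van der Waerden number: least `N` such that no valid `r`-coloring of
`{1,...,N}` (avoiding `k`-term monochromatic APs) exists. -/
noncomputable def vdw (r k : ℕ) : ℕ := sInf {N | ¬ ∃ c : ℕ → ℕ, validColoring r k N c}

/-- The block `S_i(r,k)`: `j`-th entry (`1 ≤ j ≤ p`) is `((i + j - 2) % r) + 1`. -/
def Sblock (r i j : ℕ) : ℕ := ((i + j - 2) % r) + 1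

/- ------------------- auxiliary lemmas ------------------- -/

lemma validColoring_mono {r k N M : ℕ} {c : ℕ → ℕ} (h : validColoring r k N c) (hMN : M ≤ N) :
    validColoring r k M c := by
  refine ⟨fun n h1 h2 => h.1 n h1 (h2.trans hMN), ?_⟩
  rintro ⟨a, d, h1, h2, h3, h4⟩
  exact h.2 ⟨a, d, h1, h2, h3.trans hMN, h4⟩

lemma validColoring_zero (r k : ℕ) : validColoring r k 0 (fun _ => 1) := by
  refine ⟨fun n h1 h2 => by omega, ?_⟩
  rintro ⟨a, d, h1, h2, h3, _⟩
  omega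

/-- finitary van der Waerden, derived from the Hales–Jewett theorem. -/
lemma vdw_finite (r k : ℕ) (hk : 1 ≤ k) :
    {N | ¬ ∃ c : ℕ → ℕ, validColoring r k N c}.Nonempty := by
  classical
  rcases Nat.eq_zero_or_pos r with hr0 | hr0
  · refine ⟨1, ?_⟩
    rintro ⟨c, hb, -⟩
    have := hb 1 le_rfl le_rfl
    omega
  obtain ⟨ι, ιfin, hι⟩ := Combinatorics.Line.exists_mono_in_high_dimension (Fin k) (Fin r)
  haveI := ιfin
  set n := Fintype.card ι with hn
  refine ⟨1 + n * (k - 1), ?_⟩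
  rintro ⟨c, hb, hAP⟩
  have hsum_le : ∀ v : ι → Fin k, (∑ i, ((v i : ℕ))) ≤ n * (k - 1) := by
    intro v
    calc (∑ i, ((v i : ℕ))) ≤ ∑ _i : ι, (k - 1) := by
          apply Finset.sum_le_sum; intro i _; have := (v i).isLt; omega
      _ = n * (k - 1) := by simp [hn, mul_comm]
  have hmem : ∀ v : ι → Fin k, c (1 + ∑ i, ((v i : ℕ))) - 1 < r := by
    intro v
    have h1 : 1 ≤ 1 + ∑ i, ((v i : ℕ)) := by omega
    have h2 : 1 + (∑ i, ((v i : ℕ))) ≤ 1 + n * (k - 1) := by have := hsum_le v; omega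
    have := hb _ h1 h2
    omega
  set C : (ι → Fin k) → Fin r := fun v => ⟨c (1 + ∑ i, ((v i : ℕ))) - 1, hmem v⟩ with hC
  obtain ⟨l, c₀, hl⟩ := hι C
  haveI : NeZero k := ⟨by omega⟩
  set m := (Finset.univ.filter (fun i : ι => l.idxFun i = none)).card with hm
  set B := ∑ i : ι, (if l.idxFun i = none then 0 else ((l (0 : Fin k) i : ℕ))) with hB
  have hS : ∀ x : Fin k, (∑ i, ((l x i : ℕ))) = m * (x : ℕ) + B := by
    intro x
    have hterm : ∀ i : ι, ((l x i : ℕ)) =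
        (if l.idxFun i = none then (x : ℕ) else 0) +
        (if l.idxFun i = none then 0 else ((l (0 : Fin k) i : ℕ))) := by
      intro i
      rcases h : l.idxFun i with _ | v <;> simp [Combinatorics.Line.coe_apply, h]
    rw [Finset.sum_congr rfl (fun i _ => hterm i), Finset.sum_add_distrib]
    congr 1
    rw [← Finset.sum_filter, Finset.sum_const, smul_eq_mul, ← hm]
  have hm1 : 1 ≤ m := by
    obtain ⟨i, hi⟩ := l.proper
    have : i ∈ Finset.univ.filter (fun i : ι => l.idxFun i = none) := by
      simp [hi]
    have := Finset.card_pos.mpr ⟨i, this⟩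
    omega
  have hcol : ∀ x : Fin k, c (1 + (m * (x : ℕ) + B)) = (c₀ : ℕ) + 1 := by
    intro x
    have h1 := hl x
    have h2 : c (1 + ∑ i, ((l x i : ℕ))) - 1 = (c₀ : ℕ) := congrArg Fin.val h1
    rw [hS x] at h2
    have h3 : 1 ≤ 1 + (m * (x : ℕ) + B) := by omega
    have h4 : 1 + (m * (x : ℕ) + B) ≤ 1 + n * (k - 1) := by
      have := hsum_le (l x); rw [hS x] at this; omega
    have := hb _ h3 h4
    omega
  apply hAP
  refine ⟨1 + B, m, by omega, hm1, ?_, ?_⟩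
  · have := hsum_le (l ⟨k - 1, by omega⟩)
    rw [hS ⟨k - 1, by omega⟩] at this
    simp only at this
    have hcomm : (k - 1) * m = m * (k - 1) := Nat.mul_comm _ _
    omega
  · intro i hi
    have h1 := hcol ⟨i, hi⟩
    have h2 := hcol 0
    simp only [Fin.val_mk, Fin.val_zero, Nat.mul_zero] at h1 h2
    have e1 : 1 + B + i * m = 1 + (m * i + B) := by
      have : i * m = m * i := Nat.mul_comm _ _
      omega
    have e2 : (1 + B : ℕ) = 1 + (0 + B) := by omega
    rw [e1, h1, e2, h2]

/-- the function enumerating the non-multiples of `p`: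
`gfun p m` is the `m`-th positive integer not divisible by `p`. -/
def gfun (p m : ℕ) : ℕ := m + (m - 1) / (p - 1)

lemma gfun_lt (p r q m : ℕ) (hp2 : 2 ≤ p) (hrpq : r ≤ p * q) (hq1 : 1 ≤ q)
    (hm1 : 1 ≤ m) (hms : m ≤ r - q) : gfun p m < r := by
  unfold gfun
  have hd : (m - 1) / (p - 1) ≤ ((r - q) - 1) / (p - 1) := Nat.div_le_div_right (by omega)
  have hd2 : ((r - q) - 1) / (p - 1) < q := by
    rw [Nat.div_lt_iff_lt_mul (by omega : 0 < p - 1)]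
    have h1 : q * (p - 1) + q * 1 = q * p := by rw [← Nat.mul_add]; congr 1; omega
    have h2 : q * p = p * q := Nat.mul_comm _ _
    omega
  omega

lemma gfun_not_dvd (p m : ℕ) (hp2 : 2 ≤ p) (hm : 1 ≤ m) : ¬ p ∣ gfun p m := by
  intro hdvd
  obtain ⟨u, hu⟩ := hdvd
  have h1 := Nat.div_add_mod (m - 1) (p - 1)
  have h2 : (m - 1) % (p - 1) < p - 1 := Nat.mod_lt _ (by omega)
  have h3 : (p - 1) * ((m - 1) / (p - 1)) + ((m - 1) / (p - 1)) = p * ((m - 1) / (p - 1)) := by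
    rw [Nat.sub_one_mul]
    have := Nat.le_mul_of_pos_left ((m - 1) / (p - 1)) (show 0 < p by omega)
    omega
  have h4 : gfun p m = p * ((m - 1) / (p - 1)) + ((m - 1) % (p - 1) + 1) := by
    unfold gfun; omega
  -- hence p * u = p * D + (v + 1) with v + 1 < p, contradiction
  have h5 : p * u = p * ((m - 1) / (p - 1)) + ((m - 1) % (p - 1) + 1) := by
    rw [← hu, h4]
  have h6 : (m - 1) / (p - 1) < u := by
    by_contra hcon
    push_neg at hcon
    have := Nat.mul_le_mul_left p hcon
    omega
  have h7 : p * ((m - 1) / (p - 1) + 1) ≤ p * u := Nat.mul_le_mul_left p (by omega)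
  have h8 : p * ((m - 1) / (p - 1) + 1) = p * ((m - 1) / (p - 1)) + p * 1 := Nat.mul_add _ _ _
  omega

lemma gfun_inj (p m1 m2 : ℕ) (hp2 : 2 ≤ p) (h : gfun p m1 = gfun p m2) : m1 = m2 := by
  unfold gfun at h
  rcases lt_trichotomy m1 m2 with hlt | he | hlt
  · have := Nat.div_le_div_right (c := p - 1) (show m1 - 1 ≤ m2 - 1 by omega)
    omega
  · exact he
  · have := Nat.div_le_div_right (c := p - 1) (show m2 - 1 ≤ m1 - 1 by omega)
    omega

/-- The core construction: from a valid `s`-coloring of `{1,...,W'}` build a valid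
`r`-coloring of `{1,...,p*W'}`. -/
lemma construction (p r k q W' : ℕ) (hp : p.Prime) (hpk : p ≤ k) (hr : 2 ≤ r)
    (hq : q = (r + p - 1) / p) (hs1 : 1 ≤ r - q)
    (χ : ℕ → ℕ) (hχ : validColoring (r - q) k W' χ) :
    ∃ c : ℕ → ℕ, validColoring r k (p * W') c := by
  classical
  obtain ⟨hχb, hχAP⟩ := hχ
  have hp2 : 2 ≤ p := hp.two_le
  have hr1 : 1 ≤ r := by omega
  have hp0 : 0 < p := by omega
  -- r ≤ p * q
  have hdm := Nat.div_add_mod (r + p - 1) p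
  rw [← hq] at hdm
  have hmodlt : (r + p - 1) % p < p := Nat.mod_lt _ hp0
  have hrpq : r ≤ p * q := by omega
  have hq1 : 1 ≤ q := by
    rcases Nat.eq_zero_or_pos q with h | h
    · rw [h, Nat.mul_zero] at hrpq; omega
    · exact h
  refine ⟨fun n => (gfun p (χ ((n - 1) / p + 1)) + (n - 1) % p) % r + 1, ?_, ?_⟩
  · intro n _ _
    refine ⟨Nat.le_add_left 1 _, ?_⟩
    show (gfun p (χ ((n - 1) / p + 1)) + (n - 1) % p) % r + 1 ≤ r
    have := Nat.mod_lt (gfun p (χ ((n - 1) / p + 1)) + (n - 1) % p) (show 0 < r by omega)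
    omega
  · rintro ⟨a, d, ha, hd, hbound, hmono⟩
    simp only [] at hmono
    have hW1 : 1 ≤ W' := by
      by_contra hcon
      push_neg at hcon
      have h0 : W' = 0 := by omega
      rw [h0, Nat.mul_zero] at hbound
      omega
    -- bounds on blocks
    have hblock : ∀ i, i < k → (a + i * d - 1) / p + 1 ≤ W' := by
      intro i hi
      have h1 : i * d ≤ (k - 1) * d := Nat.mul_le_mul_right d (by omega)
      have h2 : a + i * d ≤ p * W' := by omega
      have h3 : (a + i * d - 1) / p < W' := by
        rw [Nat.div_lt_iff_lt_mul hp0]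
        have : W' * p = p * W' := Nat.mul_comm _ _
        omega
      omega
    have hχbound : ∀ i, i < k →
        1 ≤ χ ((a + i * d - 1) / p + 1) ∧ χ ((a + i * d - 1) / p + 1) ≤ r - q := by
      intro i hi
      exact hχb _ (Nat.le_add_left 1 _) (hblock i hi)
    by_cases hpd : p ∣ d
    · -- d = p * e : a monochromatic AP appears in χ
      obtain ⟨e, he⟩ := hpd
      have he1 : 1 ≤ e := by
        rcases Nat.eq_zero_or_pos e with h | h
        · rw [h, Nat.mul_zero] at he; omega
        · exact h
      have hrw : ∀ i : ℕ, a + i * d - 1 = (a - 1) + p * (i * e) := by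
        intro i
        have h1 : i * d = p * (i * e) := by rw [he]; ring
        omega
      apply hχAP
      refine ⟨(a - 1) / p + 1, e, Nat.le_add_left 1 _, he1, ?_, ?_⟩
      · have h1 := hblock (k - 1) (by omega)
        rw [hrw (k - 1), Nat.add_mul_div_left _ _ hp0] at h1
        omega
      · intro i hi
        have hco := hmono i hi
        rw [hrw i, Nat.add_mul_mod_self_left, Nat.add_mul_div_left _ _ hp0] at hco
        -- hco : (gfun p (χ ((a-1)/p + i*e + 1)) + (a-1) % p) % r + 1
        --      = (gfun p (χ ((a-1)/p + 1)) + (a-1) % p) % r + 1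
        have hb1 := hχbound i hi
        rw [hrw i, Nat.add_mul_div_left _ _ hp0] at hb1
        have hb0 := hχbound 0 (by omega)
        rw [hrw 0, Nat.add_mul_div_left _ _ hp0] at hb0
        simp only [Nat.zero_mul, Nat.add_zero] at hb0
        have hg1 : gfun p (χ ((a - 1) / p + i * e + 1)) < r :=
          gfun_lt p r q _ hp2 hrpq hq1 hb1.1 hb1.2
        have hg2 : gfun p (χ ((a - 1) / p + 1)) < r :=
          gfun_lt p r q _ hp2 hrpq hq1 hb0.1 hb0.2
        have hmodeq : (gfun p (χ ((a - 1) / p + i * e + 1)) + (a - 1) % p) % r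
            = (gfun p (χ ((a - 1) / p + 1)) + (a - 1) % p) % r := by omega
        have hcancel : gfun p (χ ((a - 1) / p + i * e + 1)) % r
            = gfun p (χ ((a - 1) / p + 1)) % r :=
          Nat.ModEq.add_right_cancel' _ hmodeq
        rw [Nat.mod_eq_of_lt hg1, Nat.mod_eq_of_lt hg2] at hcancel
        have hxeq := gfun_inj p _ _ hp2 hcancel
        have : (a - 1) / p + 1 + i * e = (a - 1) / p + i * e + 1 := by omega
        rw [this, hxeq]
    · -- p does not divide d
      haveI : Fact p.Prime := ⟨hp⟩
      haveI : NeZero p := ⟨by omega⟩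
      set C := (gfun p (χ ((a - 1) / p + 1)) + (a - 1) % p) % r with hC
      have hCr : C < r := Nat.mod_lt _ (by omega)
      have hdz : (d : ZMod p) ≠ 0 := by
        rw [Ne, ZMod.natCast_eq_zero_iff]
        exact hpd
      obtain ⟨y, hy⟩ : ∃ y : ZMod p,
          y * (d : ZMod p) = ((C % p : ℕ) : ZMod p) - ((a - 1 : ℕ) : ZMod p) :=
        ⟨(((C % p : ℕ) : ZMod p) - ((a - 1 : ℕ) : ZMod p)) * (d : ZMod p)⁻¹, by
          rw [mul_assoc, inv_mul_cancel₀ hdz, mul_one]⟩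
      set i := y.val with hi
      have hip : i < p := ZMod.val_lt y
      have hik : i < k := lt_of_lt_of_le hip hpk
      have hcast : ((a - 1 + i * d : ℕ) : ZMod p) = ((C % p : ℕ) : ZMod p) := by
        push_cast
        have hy' : ((i : ℕ) : ZMod p) = y := by
          simp [hi, ZMod.natCast_val, ZMod.cast_id]
        rw [hy', hy]
        ring
      have hcong : (a - 1 + i * d) % p = C % p := by
        have hme := (ZMod.natCast_eq_natCast_iff _ _ _).mp hcast
        unfold Nat.ModEq at hme
        rw [Nat.mod_mod_of_dvd _ dvd_rfl] at hme
        exact hme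
      have hco := hmono i hik
      have hrw : a + i * d - 1 = a - 1 + i * d := by omega
      rw [hrw, hcong] at hco
      -- hco : (gfun p (χ ((a - 1 + i*d) / p + 1)) + C % p) % r + 1 = C + 1
      set gi := gfun p (χ ((a - 1 + i * d) / p + 1)) with hgi
      have hb1 := hχbound i hik
      rw [hrw] at hb1
      have hgilt : gi < r := gfun_lt p r q _ hp2 hrpq hq1 hb1.1 hb1.2
      have hgind : ¬ p ∣ gi := gfun_not_dvd p _ hp2 hb1.1
      have hjC : C % p ≤ C := Nat.mod_le _ _
      have key : (gi + C % p) % r = C := by omega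
      have hgieq : gi = C - C % p := by
        rcases Nat.lt_or_ge (gi + C % p) r with h | h
        · rw [Nat.mod_eq_of_lt h] at key; omega
        · have h2 : gi + C % p - r < r := by omega
          rw [Nat.mod_eq_sub_mod h, Nat.mod_eq_of_lt h2] at key
          omega
      apply hgind
      have hdm2 := Nat.div_add_mod C p
      exact ⟨C / p, by omega⟩

/-- The recurrence: for a prime `p ≤ k` and `r ≥ 2` with `r - ⌈r/p⌉ ≥ 1`,
`w(r,k) > p * (w(r - ⌈r/p⌉, k) - 1)`, where `⌈r/p⌉ = (r + p - 1) / p`. -/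
theorem vdw_recurrence (p r k : ℕ) (hp : p.Prime) (hpk : p ≤ k) (hr : 2 ≤ r)
    (hsub : 1 ≤ r - (r + p - 1) / p) :
    p * (vdw (r - (r + p - 1) / p) k - 1) < vdw r k := by
  classical
  have hp2 : 2 ≤ p := hp.two_le
  have hk1 : 1 ≤ k := by omega
  set q := (r + p - 1) / p with hq
  set W' := vdw (r - q) k - 1 with hW'
  obtain ⟨χ, hχ⟩ : ∃ χ : ℕ → ℕ, validColoring (r - q) k W' χ := by
    rcases Nat.eq_zero_or_pos (vdw (r - q) k) with h0 | h0
    · have : W' = 0 := by omega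
      rw [this]
      exact ⟨fun _ => 1, validColoring_zero _ _⟩
    · by_contra hcon
      have hle : vdw (r - q) k ≤ W' := Nat.sInf_le hcon
      omega
  obtain ⟨c, hc⟩ := construction p r k q W' hp hpk hr hq hsub χ hχ
  by_contra hle
  push_neg at hle
  have hmem := Nat.sInf_mem (vdw_finite r k hk1)
  exact hmem ⟨c, validColoring_mono hc hle⟩
end

section
/- Suppose there exists an s-coloring χ of {1, ..., N} with no monochromatic k-term arithmetic progression, and for each color i ∈ {1,...,s} let B_i : {0,...,p-1} → {1,...,r} be a block of length p, such that any concatenation of these blocks (in any order, with repetition) of any length contains no monochromatic k-term arithmetic progression with common difference not divisible by p, and such that all blocks are 'aligned' in the sense that for each color c of {1,...,r}, all positions of c within any single block B_i lie in a single residue class mod p determined by i and c, with distinct blocks giving distinct residue classes for c. Then the blow-up coloring χ' of {1, ..., pN} defined by χ'(p(t-1) + j) = B_{χ(t)}(j-1) for 1 ≤ j ≤ p contains no monochromatic k-term arithmetic progression. -/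
/-- Blow-up lemma: given a valid `s`-coloring `χ` of `{1,...,N}` and blocks
`B i : {0,...,p-1} → {1,...,r}` such that any concatenation of the blocks has
no monochromatic `k`-term AP with difference not divisible by `p`, and blocks
are aligned (each color occupies a single position `ρ i c` within block `i`,
distinct blocks giving distinct positions for each color), then the blow-up
coloring of `{1,...,pN}` has no monochromatic `k`-term AP. -/
theorem blowup_valid (p k s r N : ℕ) (hp : p.Prime) (hpk : p ≤ k) (hN : 1 ≤ N)
    (χ : ℕ → ℕ) (hχ : validColoring s k N χ)
    (B : ℕ → ℕ → ℕ)
    (hBr : ∀ i j, 1 ≤ i → i ≤ s → j < p → 1 ≤ B i j ∧ B i j ≤ r)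
    (hconcat : ∀ m : ℕ, ∀ σ : ℕ → ℕ, (∀ t, 1 ≤ σ t ∧ σ t ≤ s) →
      ∀ a d, 1 ≤ a → 1 ≤ d → ¬ p ∣ d → a + (k - 1) * d ≤ p * m →
        ¬ (∀ i < k, B (σ ((a + i * d - 1) / p)) ((a + i * d - 1) % p)
              = B (σ ((a - 1) / p)) ((a - 1) % p)))
    (halign : ∃ ρ : ℕ → ℕ → ℕ,
      (∀ i c j, 1 ≤ i → i ≤ s → j < p → B i j = c → j = ρ i c) ∧
      (∀ c i i', 1 ≤ i → i ≤ s → 1 ≤ i' → i' ≤ s → i ≠ i' → ρ i c ≠ ρ i' c)) :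
    ¬ hasAP (fun x => B (χ ((x - 1) / p + 1)) ((x - 1) % p)) (p * N) k := by
  rintro ⟨a, d, ha, hd, hle, hmono⟩
  have hppos : 0 < p := hp.pos
  have hs : 1 ≤ s := le_trans (hχ.1 1 le_rfl hN).1 (hχ.1 1 le_rfl hN).2
  have hk : 1 ≤ k := le_trans hp.one_lt.le hpk
  have hbound : ∀ i < k, a + i * d ≤ p * N := by
    intro i hi
    have h1 : i ≤ k - 1 := by omega
    have := Nat.mul_le_mul_right d h1
    omega
  have hdivlt : ∀ x, 1 ≤ x → x ≤ p * N → (x - 1) / p < N := by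
    intro x h1 h2
    rw [Nat.div_lt_iff_lt_mul hppos]
    have hc : N * p = p * N := Nat.mul_comm N p
    omega
  by_cases hpd : p ∣ d
  · obtain ⟨e, rfl⟩ := hpd
    have he : 1 ≤ e := by
      rcases Nat.eq_zero_or_pos e with h | h
      · subst h; simp at hd
      · exact h
    have hdiv : ∀ i, (a + i * (p * e) - 1) / p = (a - 1) / p + i * e := by
      intro i
      have hh : a + i * (p * e) - 1 = (a - 1) + (i * e) * p := by
        have : i * (p * e) = (i * e) * p := by ring
        omega
      rw [hh, Nat.add_mul_div_right _ _ hppos]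
    have hmod : ∀ i, (a + i * (p * e) - 1) % p = (a - 1) % p := by
      intro i
      have hh : a + i * (p * e) - 1 = (a - 1) + (i * e) * p := by
        have : i * (p * e) = (i * e) * p := by ring
        omega
      rw [hh, Nat.add_mul_mod_self_right]
    obtain ⟨ρ, hρ1, hρ2⟩ := halign
    have hjlt : (a - 1) % p < p := Nat.mod_lt _ hppos
    have hbase : (a - 1) / p < N := hdivlt a ha (by simpa using hbound 0 (by omega))
    have hb1 : 1 ≤ χ ((a - 1) / p + 1) ∧ χ ((a - 1) / p + 1) ≤ s :=
      hχ.1 ((a - 1) / p + 1) (Nat.succ_le_succ (Nat.zero_le _)) hbase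
    apply hχ.2
    refine ⟨(a - 1) / p + 1, e, Nat.succ_le_succ (Nat.zero_le _), he, ?_, ?_⟩
    · have h3 : a + (k - 1) * (p * e) ≤ p * N := hle
      have h4 : ((a - 1) + ((k - 1) * e) * p) / p = (a - 1) / p + (k - 1) * e :=
        Nat.add_mul_div_right _ _ hppos
      have h5 : (a - 1) + ((k - 1) * e) * p ≤ p * N - 1 := by
        have hh : (k - 1) * (p * e) = ((k - 1) * e) * p := by ring
        omega
      have h6 : ((a - 1) + ((k - 1) * e) * p) / p < N := by
        rw [Nat.div_lt_iff_lt_mul hppos]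
        have hc : N * p = p * N := Nat.mul_comm N p
        omega
      omega
    · intro i hi
      have h := hmono i hi
      simp only [hdiv i, hmod i] at h
      -- h : B (χ ((a-1)/p + i*e + 1)) ((a-1)%p) = B (χ ((a-1)/p + 1)) ((a-1)%p)
      have hu : (a - 1) / p + i * e < N := by
        have := hdivlt (a + i * (p * e)) (by omega) (hbound i hi)
        rw [hdiv i] at this
        exact this
      have hbu : 1 ≤ χ ((a - 1) / p + i * e + 1) ∧ χ ((a - 1) / p + i * e + 1) ≤ s :=
        hχ.1 ((a - 1) / p + i * e + 1) (Nat.succ_le_succ (Nat.zero_le _)) hu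
      have e1 : (a - 1) % p = ρ (χ ((a - 1) / p + 1)) (B (χ ((a - 1) / p + 1)) ((a - 1) % p)) :=
        hρ1 _ _ _ hb1.1 hb1.2 hjlt rfl
      have e2 : (a - 1) % p = ρ (χ ((a - 1) / p + i * e + 1)) (B (χ ((a - 1) / p + 1)) ((a - 1) % p)) :=
        hρ1 _ _ _ hbu.1 hbu.2 hjlt h
      have heq : χ ((a - 1) / p + i * e + 1) = χ ((a - 1) / p + 1) := by
        by_contra hne
        exact hρ2 _ _ _ hbu.1 hbu.2 hb1.1 hb1.2 hne (e2.symm.trans e1)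
      show χ ((a - 1) / p + 1 + i * e) = χ ((a - 1) / p + 1)
      have : (a - 1) / p + 1 + i * e = (a - 1) / p + i * e + 1 := by omega
      rw [this]
      exact heq
  · have hσ : ∀ t, 1 ≤ (fun t => if t < N then χ (t + 1) else 1) t ∧
        (fun t => if t < N then χ (t + 1) else 1) t ≤ s := by
      intro t
      by_cases h : t < N
      · simp only [if_pos h]
        exact hχ.1 (t + 1) (by omega) (by omega)
      · simp only [if_neg h]
        exact ⟨le_rfl, hs⟩
    apply hconcat N (fun t => if t < N then χ (t + 1) else 1) hσ a d ha hd hpd hle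
    intro i hi
    have h1 : (a + i * d - 1) / p < N := hdivlt (a + i * d) (by omega) (hbound i hi)
    have h2 : (a - 1) / p < N := hdivlt a ha (by simpa using hbound 0 (by omega))
    show B (if (a + i * d - 1) / p < N then χ ((a + i * d - 1) / p + 1) else 1)
        ((a + i * d - 1) % p) = B (if (a - 1) / p < N then χ ((a - 1) / p + 1) else 1)
        ((a - 1) % p)
    rw [if_pos h1, if_pos h2]
    exact hmono i hi
end

section
/- Fix r ≥ 2, a prime p with r ≤ p ≤ k, and define blocks S_i for i ∈ {2,...,r} as the p-tuples with j-th entry ((i+j-2) mod r)+1. Let T be the concatenation of any finite sequence of blocks chosen from {S_2, ..., S_r} (with repetition allowed, in any order). Then every monochromatic arithmetic progression of length k in T has common difference divisible by p. -/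
/-- Lemma 1, case `r ≤ p`: if `T` is the concatenation of blocks chosen (with
repetition, in any order) from `{S_2, ..., S_r}`, then every monochromatic
`k`-term AP in `T` has common difference divisible by `p`. -/
theorem concat_no_small_diff (r p k m : ℕ) (hr : 2 ≤ r) (hp : p.Prime)
    (hrp : r ≤ p) (hpk : p ≤ k)
    (σ : ℕ → ℕ) (hσ : ∀ t, 2 ≤ σ t ∧ σ t ≤ r) :
    ∀ a d, 1 ≤ a → 1 ≤ d → a + (k - 1) * d ≤ p * m →
      (∀ i < k,
          Sblock r (σ ((a + i * d - 1) / p)) ((a + i * d - 1) % p + 1)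
            = Sblock r (σ ((a - 1) / p)) ((a - 1) % p + 1)) →
      p ∣ d := by
  intro a d ha hd hle hmono
  by_contra hpd
  haveI : Fact p.Prime := ⟨hp⟩
  have hp0 : 0 < p := hp.pos
  have hr0 : 0 < r := by omega
  set c0 := Sblock r (σ ((a - 1) / p)) ((a - 1) % p + 1) with hc0
  set ρ := (c0 - 1) % r with hρ
  have hρr : ρ < r := Nat.mod_lt _ hr0
  have hρp : ρ < p := lt_of_lt_of_le hρr hrp
  have hc0def : c0 = ((σ ((a - 1) / p) + ((a - 1) % p + 1) - 2) % r) + 1 := rfl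
  have hc0r : c0 - 1 < r := by
    have := Nat.mod_lt (σ ((a - 1) / p) + ((a - 1) % p + 1) - 2) hr0
    omega
  have hρeq : ρ = c0 - 1 := by rw [hρ, Nat.mod_eq_of_lt hc0r]
  have hdz : (d : ZMod p) ≠ 0 := by
    intro h0
    exact hpd ((ZMod.natCast_eq_zero_iff d p).mp h0)
  set z : ZMod p := ((ρ : ZMod p) - ((a - 1 : ℕ) : ZMod p)) * (d : ZMod p)⁻¹ with hz
  set i := z.val with hi
  have hip : i < p := ZMod.val_lt z
  have hcast : (((a - 1) + i * d : ℕ) : ZMod p) = (ρ : ZMod p) := by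
    rw [Nat.cast_add, Nat.cast_mul, hi, ZMod.natCast_val, ZMod.cast_id, hz,
        mul_assoc, inv_mul_cancel₀ hdz, mul_one]
    ring
  have hmod : ((a - 1) + i * d) % p = ρ := by
    rw [← ZMod.val_natCast p ((a - 1) + i * d), hcast, ZMod.val_cast_of_lt hρp]
  have hkey := hmono i (lt_of_lt_of_le hip hpk)
  have hpos : a + i * d - 1 = (a - 1) + i * d := by omega
  rw [hpos, hmod] at hkey
  set s := σ (((a - 1) + i * d) / p) with hs
  have hs2 : 2 ≤ s ∧ s ≤ r := hσ _
  have hkey' : ((s - 1 + ρ) % r) + 1 = c0 := by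
    have h3 : s + (ρ + 1) - 2 = s - 1 + ρ := by omega
    rw [show Sblock r s (ρ + 1) = ((s + (ρ + 1) - 2) % r) + 1 from rfl, h3] at hkey
    exact hkey
  have h1 : (s - 1 + ρ) % r = ρ := by omega
  have hmodeq : (s - 1 + ρ) % r = (0 + ρ) % r := by
    rw [h1, zero_add, Nat.mod_eq_of_lt hρr]
  have h2 : r ∣ (s - 1) := by
    have := (Nat.ModEq.add_right_cancel' ρ hmodeq : s - 1 ≡ 0 [MOD r])
    simpa [Nat.modEq_zero_iff_dvd] using this
  have : r ≤ s - 1 := Nat.le_of_dvd (by omega) h2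
  omega
end

section
/- Let p be a prime with p ≤ k, let χ be a coloring of {1,...,pN} obtained by partitioning into N consecutive blocks of length p, where each block is one of finitely many fixed block-types, each block-type being a p-tuple of colors, and where positions of any given color within a single block-type all lie in one residue class mod p, with distinct block-types assigning that color to distinct residue classes. If x, x+mp, x+2mp, ..., x+(k-1)mp is a monochromatic arithmetic progression in χ with common difference mp (m ≥ 1), then all the blocks containing the terms x + imp are of the same block-type, and the block indices t_0, t_1, ..., t_{k-1} (where term i lies in block t_i) form an arithmetic progression with common difference m. -/
/-- If a coloring of `{1,...,pN}` is built from `N` consecutive blocks of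
length `p`, each a block-type `B (τ t)` in which every color occupies a unique
position `ρ i c` (distinct types giving distinct positions), then any
monochromatic `k`-term AP with common difference `m*p` has all its terms in
blocks of the same type, and its block indices form an AP with difference `m`. -/
theorem blocks_same_type (p k N q m x : ℕ) (hp : p.Prime) (hpk : p ≤ k)
    (B : ℕ → ℕ → ℕ) (τ : ℕ → ℕ) (hτ : ∀ t, 1 ≤ t → t ≤ N → τ t < q)
    (ρ : ℕ → ℕ → ℕ)
    (hal : ∀ i c j, i < q → j < p → B i j = c → j = ρ i c)
    (hinj : ∀ c i i', i < q → i' < q → i ≠ i' → ρ i c ≠ ρ i' c)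
    (hm : 1 ≤ m) (hx : 1 ≤ x) (hub : x + (k - 1) * (m * p) ≤ p * N)
    (hmono : ∀ i < k,
        B (τ ((x + i * (m * p) - 1) / p + 1)) ((x + i * (m * p) - 1) % p)
          = B (τ ((x - 1) / p + 1)) ((x - 1) % p)) :
    (∀ i < k, τ ((x + i * (m * p) - 1) / p + 1) = τ ((x - 1) / p + 1)) ∧
    (∀ i < k, (x + i * (m * p) - 1) / p + 1 = ((x - 1) / p + 1) + i * m) := by

  have hp0 : 0 < p := hp.pos
  have key : ∀ i, x + i * (m * p) - 1 = (x - 1) + (i * m) * p := by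
    intro i
    have h1 : i * (m * p) = (i * m) * p := by ring
    omega
  have hdiv : ∀ i, (x + i * (m * p) - 1) / p = (x - 1) / p + i * m := by
    intro i
    rw [key i, Nat.add_mul_div_right _ _ hp0]
  have hmod : ∀ i, (x + i * (m * p) - 1) % p = (x - 1) % p := by
    intro i
    rw [key i, Nat.add_mul_mod_self_right]
  have hbound : ∀ i < k, 1 ≤ (x + i * (m * p) - 1) / p + 1 ∧
      (x + i * (m * p) - 1) / p + 1 ≤ N := by
    intro i hi
    refine ⟨Nat.le_add_left 1 _, ?_⟩
    have hk1 : 1 ≤ k := le_trans hp.two_le hpk |>.trans' (by omega)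
    have hle : x + i * (m * p) ≤ x + (k - 1) * (m * p) :=
by
      gcongr
      omega
    have hlt : (x + i * (m * p) - 1) / p < N := by
      rw [Nat.div_lt_iff_lt_mul hp0]
      have : x + i * (m * p) ≤ p * N := by omega
      have hpn : p * N = N * p := by ring
      omega
    omega
  constructor
  · intro i hi
    have hk1 : (1:ℕ) ≤ k := by
      have := hp.two_le; omega
    have hb0 := hbound 0 (by omega)
    have hbi := hbound i hi
    have e0 : x + 0 * (m * p) - 1 = x - 1 := by simp
    rw [e0] at hb0
    have hq0 : τ ((x - 1) / p + 1) < q := hτ _ (by omega) hb0.2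
    have hqi : τ ((x + i * (m * p) - 1) / p + 1) < q :=
      hτ _ hbi.1 hbi.2
    have hjlt : (x - 1) % p < p := Nat.mod_lt _ hp0
    have hmi := hmono i hi
    rw [hmod i] at hmi
    by_contra hne
    have h1 : (x - 1) % p = ρ (τ ((x + i * (m * p) - 1) / p + 1))
        (B (τ ((x - 1) / p + 1)) ((x - 1) % p)) := hal _ _ _ hqi hjlt hmi
    have h2 : (x - 1) % p = ρ (τ ((x - 1) / p + 1))
        (B (τ ((x - 1) / p + 1)) ((x - 1) % p)) := hal _ _ _ hq0 hjlt rfl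
    exact hinj _ _ _ hqi hq0 hne (h1.symm.trans h2)
  · intro i hi
    rw [hdiv i]; omega
end

section
/- Let p be prime and r > p with r - ⌈r/p⌉ ≥ 1. Define blocks S_i (i ∈ {1,...,r}) as the p-tuples with j-th entry ((i+j-2) mod r)+1, and exclude the ⌈r/p⌉ blocks S_{1+pm} for m ∈ {0, 1, ..., ⌈r/p⌉ - 1}. Then for each color c ∈ {1,...,r}, the set of residues modulo p of positions at which c appears, across all non-excluded blocks, has size at most p - 1. -/
/-- Lemma 1, case `r > p`: removing the `⌈r/p⌉` blocks `S_{1+pm}`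
(`0 ≤ m < ⌈r/p⌉`) leaves, for each color `c`, positions whose residues mod `p`
across all remaining blocks form a set of size at most `p - 1`. -/
theorem excluded_blocks_miss_residue (r p : ℕ) (hp : p.Prime) (hrp : p < r)
    (hsub : 1 ≤ r - (r + p - 1) / p) :
    ∀ c, 1 ≤ c → c ≤ r →
      (((((Finset.Icc 1 r).filter
            (fun i => ¬ ∃ m < (r + p - 1) / p, i = 1 + p * m)) ×ˢ
          Finset.Icc 1 p).filter (fun q => Sblock r q.1 q.2 = c)).image
        (fun q => q.2 % p)).card ≤ p - 1 := by
  intro c hc1 hcr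
  have hppos : 0 < p := hp.pos
  set j0 : ℕ := (c - 1) % p + 1 with hj0def
  have hmodlt : (c - 1) % p < p := Nat.mod_lt _ hppos
  have hdm : p * ((c - 1) / p) + (c - 1) % p = c - 1 := Nat.div_add_mod _ _
  have hj0le : j0 ≤ p := by omega
  have hj0c : j0 ≤ c := by
    have : (c - 1) % p ≤ c - 1 := Nat.mod_le _ _
    omega
  have hceil : (r + p - 1) / p = (r - 1) / p + 1 := by
    have h1 : r + p - 1 = (r - 1) + p := by omega
    rw [h1, Nat.add_div_right _ hppos]
  -- the image misses residue j0 % p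
  have hsubset : (((((Finset.Icc 1 r).filter
            (fun i => ¬ ∃ m < (r + p - 1) / p, i = 1 + p * m)) ×ˢ
          Finset.Icc 1 p).filter (fun q => Sblock r q.1 q.2 = c)).image
        (fun q => q.2 % p)) ⊆ (Finset.range p).erase (j0 % p) := by
    intro x hx
    simp only [Finset.mem_image, Finset.mem_filter, Finset.mem_product,
      Finset.mem_Icc] at hx
    obtain ⟨⟨i, j⟩, ⟨⟨⟨⟨hi1, hir⟩, hnex⟩, hj1, hjp⟩, hS⟩, rfl⟩ := hx
    dsimp only at hS hnex hi1 hir hj1 hjp ⊢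
    simp only [Finset.mem_erase, Finset.mem_range]
    refine ⟨?_, Nat.mod_lt _ hppos⟩
    intro heq
    -- from j % p = j0 % p and 1 ≤ j,j0 ≤ p, deduce j = j0
    have hj : j = j0 := by
      rcases eq_or_lt_of_le hjp with h | h
      · -- j = p
        have h0 : j % p = 0 := by rw [h, Nat.mod_self]
        have h0' : j0 % p = 0 := by omega
        have hd : p ∣ j0 := Nat.dvd_of_mod_eq_zero h0'
        have := Nat.le_of_dvd (by omega) hd
        omega
      · have hjm : j % p = j := Nat.mod_eq_of_lt h
        rcases eq_or_lt_of_le hj0le with h' | h'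
        · have h0' : j0 % p = 0 := by rw [h', Nat.mod_self]
          omega
        · have : j0 % p = j0 := Nat.mod_eq_of_lt h'
          omega
    subst hj
    -- analyze Sblock equation
    have hS' : (i + j0 - 2) % r = c - 1 := by
      have h := hS; simp only [Sblock] at h; omega
    have hrpos : 0 < r := by omega
    rcases lt_or_ge (i + j0 - 2) r with ht | ht
    · rw [Nat.mod_eq_of_lt ht] at hS'
      -- i = 1 + p * ((c-1)/p), an excluded block
      apply hnex
      refine ⟨(c - 1) / p, ?_, by omega⟩
      rw [hceil]
      have := Nat.div_le_div_right (c := p) (show c - 1 ≤ r - 1 by omega)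
      omega
    · have ht2 : i + j0 - 2 - r < r := by omega
      have : (i + j0 - 2) % r = i + j0 - 2 - r := by
        rw [Nat.mod_eq_sub_mod ht, Nat.mod_eq_of_lt ht2]
      omega
  calc _ ≤ ((Finset.range p).erase (j0 % p)).card := Finset.card_le_card hsubset
    _ = p - 1 := by
        rw [Finset.card_erase_of_mem (Finset.mem_range.2 (Nat.mod_lt _ hppos)),
          Finset.card_range]
end

section
/- Fix k and let p be the largest prime ≤ k. For each r ∈ {1, 2, ..., p} there is an explicit r-coloring of {1, 2, ..., p^{r-1}(k-1)} containing no monochromatic k-term arithmetic progression, constructed recursively: start with the constant 1-coloring of {1,...,k-1}, and at each stage replace each element of color i in the current (r-1)-coloring by the block S_i(r,k) of length p. -/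
lemma bound_aux {p N a t : ℕ} (hp : 0 < p) (ha : 1 ≤ a) (h : a + t*p ≤ p*N) :
    (a-1)/p + t < N := by
  have hpN : p*N = N*p := mul_comm p N
  have hN : 1 ≤ N := by nlinarith
  have h1 : (a-1) + t*p < N*p := by omega
  have := (Nat.div_lt_iff_lt_mul hp).2 h1
  rwa [Nat.add_mul_div_right _ _ hp] at this

lemma div_aux {p N a : ℕ} (hp : 0 < p) (ha : 1 ≤ a) (hle : a ≤ p * N) :
    (a - 1) / p + 1 ≤ N := by
  have := bound_aux (N := N) (t := 0) hp ha (by omega)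
  omega

lemma step_lemma (k p N r : ℕ) (hp : p.Prime) (hpk : p ≤ k) (hr2 : 2 ≤ r) (hrp : r ≤ p)
    (c' : ℕ → ℕ) (hc' : validColoring (r-1) k N c') :
    validColoring r k (p*N)
      (fun n => ((c' ((n-1)/p + 1) - 1 + (n-1) % p) % r) + 1) := by
  obtain ⟨hb', hAP'⟩ := hc'
  have hp0 : 0 < p := hp.pos
  constructor
  · intro n _ _
    show 1 ≤ (c' ((n-1)/p + 1) - 1 + (n-1) % p) % r + 1
      ∧ (c' ((n-1)/p + 1) - 1 + (n-1) % p) % r + 1 ≤ r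
    have := Nat.mod_lt (c' ((n-1)/p + 1) - 1 + (n-1) % p) (show 0 < r by omega)
    exact ⟨Nat.le_add_left 1 _, this⟩
  · rintro ⟨a, d, ha, hd, hbound, hcol⟩
    simp only at hcol
    by_cases hdvd : p ∣ d
    · -- Case 1: d divisible by p; project to an AP for c'
      obtain ⟨d', rfl⟩ := hdvd
      have hd' : 1 ≤ d' := by
        rcases Nat.eq_zero_or_pos d' with h | h
        · simp [h] at hd
        · exact h
      apply hAP'
      refine ⟨(a-1)/p + 1, d', Nat.le_add_left 1 _, hd', ?_, ?_⟩
      · -- bound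
        have e : (k-1)*(p*d') = (k-1)*d'*p := by ring
        rw [e] at hbound
        have h2 := bound_aux hp0 ha hbound
        omega
      · intro i hik
        have hci := hcol i hik
        have e1 : a + i*(p*d') - 1 = (a-1) + i*d'*p := by
          have : i*(p*d') = i*d'*p := by ring
          omega
        rw [e1, Nat.add_mul_div_right _ _ hp0, Nat.add_mul_mod_self_right] at hci
        -- bounds on c' values
        have hble : (a-1)/p + 1 + (k-1)*d' ≤ N := by
          have e : (k-1)*(p*d') = (k-1)*d'*p := by ring
          rw [e] at hbound
          have := bound_aux hp0 ha hbound
          omega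
        have hidle : i*d' ≤ (k-1)*d' := Nat.mul_le_mul_right _ (by omega)
        have hx := hb' ((a-1)/p + i*d' + 1) (Nat.le_add_left 1 _) (by omega)
        have hy := hb' ((a-1)/p + 1) (Nat.le_add_left 1 _) (by omega)
        have hci' : (c' ((a-1)/p + i*d' + 1) - 1 + (a-1)%p) % r
            = (c' ((a-1)/p + 1) - 1 + (a-1)%p) % r := Nat.add_right_cancel hci
        have hm : c' ((a-1)/p + i*d' + 1) - 1 ≡ c' ((a-1)/p + 1) - 1 [MOD r] :=
          Nat.ModEq.add_right_cancel' _ hci'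
        have hm' := hm.eq_of_lt_of_lt (by omega) (by omega)
        have : c' ((a-1)/p + i*d' + 1) = c' ((a-1)/p + 1) := by omega
        rw [show (a-1)/p + 1 + i*d' = (a-1)/p + i*d' + 1 by omega]
        exact this
    · -- Case 2: d not divisible by p
      haveI : Fact p.Prime := ⟨hp⟩
      haveI : NeZero p := ⟨hp.pos.ne'⟩
      set v := (c' ((a-1)/p + 1) - 1 + (a-1) % p) % r with hv
      have hvr : v < r := Nat.mod_lt _ (by omega)
      set s := (v + 1) % r with hs
      have hsr : s < r := Nat.mod_lt _ (by omega)
      have hd0 : (d : ZMod p) ≠ 0 := by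
        rw [Ne, ZMod.natCast_eq_zero_iff]
        exact hdvd
      set u : ZMod p := ((s : ZMod p) - ((a-1 : ℕ) : ZMod p)) * (d : ZMod p)⁻¹ with hu
      set i := u.val with hi
      have hip : i < p := ZMod.val_lt u
      have key : ((a - 1 + i * d : ℕ) : ZMod p) = (s : ZMod p) := by
        push_cast
        rw [hi, ZMod.natCast_val, ZMod.cast_id, hu, mul_assoc,
          inv_mul_cancel₀ hd0, mul_one]
        ring
      have hmod : (a - 1 + i * d) % p = s := by
        have h1 : ((a - 1 + i * d : ℕ) : ZMod p).val = ((s : ℕ) : ZMod p).val := by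
          rw [key]
        rw [ZMod.val_natCast, ZMod.val_natCast] at h1
        rw [h1, Nat.mod_eq_of_lt (by omega)]
      have hci := hcol i (by omega)
      have e1 : a + i*d - 1 = (a-1) + i*d := by omega
      rw [e1, hmod] at hci
      -- bound on block
      have hild : i*d ≤ (k-1)*d := Nat.mul_le_mul_right _ (by omega)
      have hble : ((a-1) + i*d)/p + 1 ≤ N := by
        have := div_aux hp0 (show 1 ≤ a + i*d by omega) (show a + i*d ≤ p*N by omega)
        have e2 : a + i*d - 1 = (a-1) + i*d := by omega
        rwa [e2] at this
      have hx := hb' (((a-1) + i*d)/p + 1) (Nat.le_add_left 1 _) hble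
      set x := c' (((a-1) + i*d)/p + 1) - 1 with hxd
      have hci' : (x + s) % r = v := Nat.add_right_cancel hci
      have h4 : x + s ≡ x + (v + 1) [MOD r] := Nat.ModEq.add_left x (Nat.mod_modEq _ _)
      have h5 : (x + 1) + v ≡ 0 + v [MOD r] := by
        have h5' : x + (v + 1) ≡ v [MOD r] :=
          h4.symm.trans (show (x+s) ≡ v [MOD r] by
            unfold Nat.ModEq; rw [hci', Nat.mod_eq_of_lt hvr])
        have e : x + (v+1) = (x+1) + v := by omega
        rw [e] at h5'
        exact h5'.trans (by rw [Nat.zero_add])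
      have h6 : x + 1 ≡ 0 [MOD r] := h5.add_right_cancel' v
      have h7 : r ∣ x + 1 := Nat.modEq_zero_iff_dvd.1 h6
      have := Nat.le_of_dvd (Nat.succ_pos x) h7
      omega

/-- Corollary: for `p` the largest prime `≤ k` and every `1 ≤ r ≤ p`, there
is an `r`-coloring of `{1,...,p^(r-1)*(k-1)}` with no monochromatic `k`-term
AP (constructed recursively by block substitution). -/
theorem recursive_construction (k p : ℕ) (hk : 2 ≤ k) (hp : p.Prime)
    (hpk : p ≤ k) (hlargest : ∀ q, Nat.Prime q → q ≤ k → q ≤ p) :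
    ∀ r, 1 ≤ r → r ≤ p →
      ∃ c : ℕ → ℕ, validColoring r k (p ^ (r - 1) * (k - 1)) c := by
  intro r hr1 hrp
  induction r with
  | zero => omega
  | succ n ih =>
    rcases Nat.eq_zero_or_pos n with h0 | h1
    · subst h0
      refine ⟨fun _ => 1, fun n _ _ => ⟨le_refl 1, le_refl 1⟩, ?_⟩
      rintro ⟨a, d, ha, hd, hb, -⟩
      rw [pow_zero, one_mul] at hb
      have := Nat.mul_le_mul_left (k-1) hd
      omega
    · obtain ⟨c', hc'⟩ := ih (by omega) (by omega)
      have hs := step_lemma k p (p^(n-1)*(k-1)) (n+1) hp hpk (by omega) hrp c' hc'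
      have e : p ^ (n + 1 - 1) * (k - 1) = p * (p ^ (n - 1) * (k - 1)) := by
        rw [Nat.add_sub_cancel, ← mul_assoc]
        congr 1
        conv_lhs => rw [show n = (n-1)+1 by omega]
        rw [pow_succ, mul_comm]
      rw [e]
      exact ⟨_, hs⟩
end
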